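/- Let (G_ω, r) be an increasing weighted tree with bipartition (U, V) of G, and let A(G_ω) be the set of vertices v admitting a simple path v = v₁ → ⋯ → v_{2m} with m ≥ 1 and ω(v_{2m−1}v_{2m}) < μ(v_{2m}). Then U ⊄ A(G_ω) and V ⊄ A(G_ω), i.e., neither side of the bipartition is entirely contained in A(G_ω). -/

import Mathlib

open MvPolynomial SimpleGraph

/-- The weight function `ω` on the edges of `G` is weakly increasing along every
simple path from a leaf to the root `r`. -/
def IsIncreasingRoot {n : ℕ} (G : SimpleGraph (Fin n)) [DecidableRel G.Adj]
    (ω : Sym2 (Fin n) → ℕ) (r : Fin n) : Prop :=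
  ∀ v : Fin n, G.degree v = 1 → ∀ p : G.Walk v r, p.IsPath →
    ∀ i : ℕ, i + 2 < p.support.length →
      ω s(p.support.getD i v, p.support.getD (i + 1) v) ≤
        ω s(p.support.getD (i + 1) v, p.support.getD (i + 2) v)

/-- The weight function `ω` is strictly increasing along every simple path from a leaf
to the root `r`. -/
def IsStrictlyIncreasingRoot {n : ℕ} (G : SimpleGraph (Fin n)) [DecidableRel G.Adj]
    (ω : Sym2 (Fin n) → ℕ) (r : Fin n) : Prop :=
  ∀ v : Fin n, G.degree v = 1 → ∀ p : G.Walk v r, p.IsPath →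
    ∀ i : ℕ, i + 2 < p.support.length →
      ω s(p.support.getD i v, p.support.getD (i + 1) v) <
        ω s(p.support.getD (i + 1) v, p.support.getD (i + 2) v)

/-- A vertex `v₂` is special: there is a simple path `v₁ → v₂ → v₃ → ⋯ → r` from a leaf `v₁`
of length at least 2 with `ω(v₁v₂) = ω(v₂v₃)`. -/
def IsSpecialVertex {n : ℕ} (G : SimpleGraph (Fin n)) [DecidableRel G.Adj]
    (ω : Sym2 (Fin n) → ℕ) (r : Fin n) (v₂ : Fin n) : Prop :=
  ∃ (v₁ : Fin n) (p : G.Walk v₁ r), G.degree v₁ = 1 ∧ p.IsPath ∧ 2 ≤ p.length ∧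
    p.support.getD 1 v₁ = v₂ ∧
    ω s(p.support.getD 0 v₁, p.support.getD 1 v₁) =
      ω s(p.support.getD 1 v₁, p.support.getD 2 v₁)

/-- An edge `uv` is special: there is a simple path `v₁ → u → v → ⋯ → r` (at least 3 vertices)
with `ω(v₁u) = ω(uv)`. -/
def IsSpecialEdge {n : ℕ} (G : SimpleGraph (Fin n))
    (ω : Sym2 (Fin n) → ℕ) (r : Fin n) (e : Sym2 (Fin n)) : Prop :=
  ∃ (v₁ : Fin n) (p : G.Walk v₁ r), p.IsPath ∧ 2 ≤ p.length ∧
    e = s(p.support.getD 1 v₁, p.support.getD 2 v₁) ∧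
    ω s(p.support.getD 0 v₁, p.support.getD 1 v₁) =
      ω s(p.support.getD 1 v₁, p.support.getD 2 v₁)

/-- `μ(v)`: the maximal weight of an edge at `v`. -/
def muWeight {n : ℕ} (G : SimpleGraph (Fin n)) [DecidableRel G.Adj]
    (ω : Sym2 (Fin n) → ℕ) (v : Fin n) : ℕ :=
  (G.neighborFinset v).sup fun u => ω s(u, v)

/-- The set `A(G_ω)` of vertices admitting a simple path `v = v₁ → ⋯ → v_{2m}` (`m ≥ 1`)
with `ω(v_{2m-1}v_{2m}) < μ(v_{2m})`. -/
def Aset {n : ℕ} (G : SimpleGraph (Fin n)) [DecidableRel G.Adj]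
    (ω : Sym2 (Fin n) → ℕ) : Set (Fin n) :=
  {v | ∃ (m : ℕ) (w : Fin n) (p : G.Walk v w), 1 ≤ m ∧ p.IsPath ∧
    p.support.length = 2 * m ∧
    ω s(p.support.getD (2 * m - 2) v, w) < muWeight G ω w}

namespace BipartAux
open SimpleGraph Walk

variable {n : ℕ} {G : SimpleGraph (Fin n)} {r : Fin n}

/-- The canonical (unique) path from `v` to `r` in a tree. -/
noncomputable def tP (h : G.IsTree) (r v : Fin n) : G.Walk v r :=
  (h.existsUnique_path v r).choose

lemma tP_isPath (h : G.IsTree) (r v : Fin n) : (tP h r v).IsPath :=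
  (h.existsUnique_path v r).choose_spec.1

lemma tP_unique (h : G.IsTree) {v : Fin n} (p : G.Walk v r) (hp : p.IsPath) :
    p = tP h r v :=
  (h.existsUnique_path v r).choose_spec.2 p hp

lemma tP_root (h : G.IsTree) (r : Fin n) : tP h r r = Walk.nil :=
  (tP_unique h Walk.nil IsPath.nil).symm

/-- `u` is the parent of `v` (towards root `r`). -/
def Par (h : G.IsTree) (r u v : Fin n) : Prop :=
  ∃ ha : G.Adj v u, tP h r v = Walk.cons ha (tP h r u)

lemma not_par_root (h : G.IsTree) (u : Fin n) : ¬ Par h r u r := by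
  rintro ⟨ha, he⟩
  rw [tP_root] at he
  have := congrArg Walk.length he
  simp at this

lemma par_unique (h : G.IsTree) {u u' v : Fin n} (h1 : Par h r u v) (h2 : Par h r u' v) :
    u = u' := by
  obtain ⟨a1, e1⟩ := h1; obtain ⟨a2, e2⟩ := h2
  have hs := congrArg Walk.support (e1.symm.trans e2)
  rw [Walk.support_cons, Walk.support_cons, Walk.support_eq_cons (tP h r u),
    Walk.support_eq_cons (tP h r u')] at hs
  simp only [List.cons.injEq] at hs
  exact hs.2.1

lemma par_dichotomy (h : G.IsTree) {u v : Fin n} (ha : G.Adj u v) :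
    Par h r u v ∨ Par h r v u := by
  classical
  by_cases hv : v ∈ (tP h r u).support
  · right
    have hdrop : ((tP h r u).dropUntil v hv) = tP h r v :=
      tP_unique h _ ((tP_isPath h r u).dropUntil hv)
    have htake : ((tP h r u).takeUntil v hv) = Walk.cons ha Walk.nil := by
      refine (h.existsUnique_path u v).unique ((tP_isPath h r u).takeUntil hv) ?_
      simp [ha.ne]
    refine ⟨ha, ?_⟩
    conv_lhs => rw [← (tP h r u).take_spec hv]
    rw [htake, hdrop, Walk.cons_append, Walk.nil_append]
  · left
    have hpath : (Walk.cons ha.symm (tP h r u)).IsPath :=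
      (tP_isPath h r u).cons hv
    exact ⟨ha.symm, (tP_unique h _ hpath).symm⟩


lemma exists_par (h : G.IsTree) {v : Fin n} (hv : v ≠ r) : ∃ u, Par h r u v := by
  have hnil : ¬ (tP h r v).Nil := Walk.not_nil_of_ne hv
  obtain ⟨u, ha, q, hq⟩ := Walk.not_nil_iff.mp hnil
  have hqp : q.IsPath := by
    have := tP_isPath h r v
    rw [hq, Walk.cons_isPath_iff] at this
    exact this.1
  exact ⟨u, ha, by rw [hq, tP_unique h q hqp]⟩

lemma exists_adj (h : G.IsTree) (hn : 2 ≤ n) (v : Fin n) : ∃ u, G.Adj v u := by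
  obtain ⟨u, hune⟩ := Fintype.exists_ne_of_one_lt_card (by simp; omega) v
  obtain ⟨p⟩ := h.isConnected.preconnected v u
  have hnil : ¬ p.Nil := Walk.not_nil_of_ne (Ne.symm hune)
  exact ⟨p.getVert 1, p.adj_snd hnil⟩

lemma exists_child [DecidableRel G.Adj] (h : G.IsTree) (hn : 2 ≤ n) {v : Fin n}
    (hdeg : G.degree v ≠ 1) : ∃ w, Par h r v w := by
  by_cases hv : v = r
  · subst hv
    obtain ⟨u, hu⟩ := exists_adj h hn v
    exact ⟨u, (par_dichotomy h hu).resolve_right (not_par_root h u)⟩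
  · obtain ⟨u, hu⟩ := exists_par h hv
    have humem : u ∈ G.neighborFinset v := by
      rw [SimpleGraph.mem_neighborFinset]; exact hu.1
    have hcard : 1 < (G.neighborFinset v).card := by
      have h1 : 0 < (G.neighborFinset v).card := Finset.card_pos.mpr ⟨u, humem⟩
      have : (G.neighborFinset v).card ≠ 1 := by rwa [← SimpleGraph.card_neighborFinset_eq_degree] at hdeg
      omega
    obtain ⟨w, hwmem, hwu⟩ := Finset.exists_mem_ne hcard u
    rw [SimpleGraph.mem_neighborFinset] at hwmem
    refine ⟨w, (par_dichotomy h hwmem.symm).resolve_left ?_⟩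
    intro hwv
    exact hwu (par_unique h hwv hu)

lemma par_length (h : G.IsTree) {u v : Fin n} (huv : Par h r u v) :
    (tP h r v).length = (tP h r u).length + 1 := by
  obtain ⟨ha, he⟩ := huv
  rw [he, Walk.length_cons]

lemma exists_leaf [DecidableRel G.Adj] (h : G.IsTree) (hn : 2 ≤ n) (v : Fin n) :
    ∃ (ℓ : Fin n) (q : G.Walk ℓ v), G.degree ℓ = 1 ∧ (q.append (tP h r v)).IsPath := by
  suffices H : ∀ k (v : Fin n), n - (tP h r v).length ≤ k →
      ∃ (ℓ : Fin n) (q : G.Walk ℓ v), G.degree ℓ = 1 ∧ (q.append (tP h r v)).IsPath by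
    exact H n v (by omega)
  intro k
  induction k with
  | zero =>
    intro v hv
    exfalso
    have h1 : (tP h r v).support.length ≤ n := by
      simpa using (tP_isPath h r v).support_nodup.length_le_card
    rw [Walk.length_support] at h1
    omega
  | succ k ih =>
    intro v hv
    by_cases hdeg : G.degree v = 1
    · exact ⟨v, Walk.nil, hdeg, by simpa using tP_isPath h r v⟩
    · obtain ⟨w, haw, hew⟩ := exists_child h hn hdeg
      have hlen : (tP h r w).length = (tP h r v).length + 1 := par_length h ⟨haw, hew⟩
      obtain ⟨ℓ, q, hdℓ, hq⟩ := ih w (by omega)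
      refine ⟨ℓ, q.append (Walk.cons haw Walk.nil), hdℓ, ?_⟩
      have he : (q.append (Walk.cons haw Walk.nil)).append (tP h r v) = q.append (tP h r w) := by
        rw [hew, ← Walk.append_assoc, Walk.cons_append, Walk.nil_append]
      rw [he]
      exact hq

lemma support_getD_eq_getVert :
    ∀ {v w : Fin n} (p : G.Walk v w) (i : ℕ) (d : Fin n), i ≤ p.length →
      p.support.getD i d = p.getVert i := by
  intro v w p
  induction p with
  | nil =>
    intro i d hi
    simp only [Walk.length_nil, Nat.le_zero] at hi
    subst hi
    simp
  | cons ha q ih =>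
    intro i d hi
    cases i with
    | zero => simp
    | succ j =>
      rw [Walk.support_cons, Walk.getVert_cons_succ, List.getD_cons_succ]
      exact ih j d (by rw [Walk.length_cons] at hi; omega)


lemma mono [DecidableRel G.Adj] (h : G.IsTree) (hn : 2 ≤ n) (ω : Sym2 (Fin n) → ℕ)
    (hroot : IsIncreasingRoot G ω r) {u v z : Fin n}
    (huv : Par h r u v) (hz : G.Adj z v) (hzu : z ≠ u) :
    ω s(z, v) ≤ ω s(v, u) := by
  have hvz : Par h r v z := by
    refine (par_dichotomy h hz).resolve_left ?_
    intro hzv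
    exact hzu (par_unique h hzv huv)
  obtain ⟨haz, hez⟩ := hvz
  obtain ⟨hbv, hev⟩ := huv
  obtain ⟨ℓ, q, hdℓ, hq⟩ := exists_leaf h hn z
  have hsup : (q.append (tP h r z)).support
      = q.support ++ (v :: u :: (tP h r u).support.tail) := by
    rw [Walk.support_append]
    congr 1
    rw [hez, Walk.support_cons, List.tail_cons, hev, Walk.support_cons]
    conv_lhs => rw [Walk.support_eq_cons (tP h r u)]
  have hql : q.support.length = q.length + 1 := q.length_support
  have key := hroot ℓ hdℓ (q.append (tP h r z)) hq q.length ?_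
  · have e1 : (q.append (tP h r z)).support.getD q.length ℓ = z := by
      rw [hsup, List.getD_append _ _ _ _ (by omega),
        support_getD_eq_getVert q q.length ℓ le_rfl, Walk.getVert_length]
    have e2 : (q.append (tP h r z)).support.getD (q.length + 1) ℓ = v := by
      rw [hsup, List.getD_append_right _ _ _ _ (by omega)]
      have : q.length + 1 - q.support.length = 0 := by omega
      rw [this, List.getD_cons_zero]
    have e3 : (q.append (tP h r z)).support.getD (q.length + 2) ℓ = u := by
      rw [hsup, List.getD_append_right _ _ _ _ (by omega)]
      have : q.length + 2 - q.support.length = 1 := by omega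
      rw [this, List.getD_cons_succ, List.getD_cons_zero]
    rwa [e1, e2, e3] at key
  · rw [Walk.length_support, Walk.length_append]
    have h1 : (tP h r z).length = (tP h r v).length + 1 := by rw [hez, Walk.length_cons]
    have h2 : (tP h r v).length = (tP h r u).length + 1 := by rw [hev, Walk.length_cons]
    omega

lemma mu_le [DecidableRel G.Adj] (h : G.IsTree) (hn : 2 ≤ n) (ω : Sym2 (Fin n) → ℕ)
    (hroot : IsIncreasingRoot G ω r) {u v : Fin n} (huv : Par h r u v) :
    muWeight G ω v ≤ ω s(u, v) := by
  apply Finset.sup_le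
  intro z hz
  rw [SimpleGraph.mem_neighborFinset] at hz
  by_cases hzu : z = u
  · subst hzu; exact le_rfl
  · calc ω s(z, v) ≤ ω s(v, u) := mono h hn ω hroot huv hz.symm hzu
      _ = ω s(u, v) := by rw [Sym2.eq_swap]

lemma desc (h : G.IsTree) :
    ∀ {v w : Fin n} (p : G.Walk v w), p.IsPath → 0 < p.length →
      Par h r v (p.getVert 1) → Par h r (p.getVert (p.length - 1)) w := by
  intro v w p
  induction p with
  | nil => intro _ h0 _; simp at h0
  | @cons v y w ha q ih =>
    intro hp hlen hpar
    have hgv1 : (Walk.cons ha q).getVert 1 = y := by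
      rw [Walk.getVert_cons_succ, Walk.getVert_zero]
    rw [hgv1] at hpar
    rcases Nat.eq_zero_or_pos q.length with h0 | h0
    · have hyw : y = w := q.eq_of_length_eq_zero h0
      subst hyw
      have : (Walk.cons ha q).length - 1 = 0 := by rw [Walk.length_cons]; omega
      rw [this, Walk.getVert_zero]
      exact hpar
    · have hq : q.IsPath := hp.of_cons
      have hq1 : Par h r y (q.getVert 1) := by
        have hadj : G.Adj y (q.getVert 1) := by
          have := q.adj_getVert_succ (i := 0) h0
          rwa [Walk.getVert_zero] at this
        refine (par_dichotomy h hadj).resolve_right ?_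
        intro h1
        have hzv : q.getVert 1 = v := par_unique h h1 hpar
        have hvmem : v ∈ q.support := by
          rw [← hzv]
          exact Walk.mem_support_iff_exists_getVert.mpr ⟨1, rfl, by omega⟩
        exact ((Walk.cons_isPath_iff ha q).1 hp).2 hvmem
      have hres := ih hq h0 hq1
      have hlq : (Walk.cons ha q).length - 1 = (q.length - 1) + 1 := by
        rw [Walk.length_cons]; omega
      rw [hlq, Walk.getVert_cons_succ]
      exact hres

lemma desc_root (h : G.IsTree) {w : Fin n} (p : G.Walk r w) (hp : p.IsPath)
    (hl : 0 < p.length) : Par h r (p.getVert (p.length - 1)) w := by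
  apply desc h p hp hl
  have hadj : G.Adj r (p.getVert 1) := by
    have := p.adj_getVert_succ (i := 0) hl
    rwa [Walk.getVert_zero] at this
  exact (par_dichotomy h hadj).resolve_right (not_par_root h _)

lemma after_root (h : G.IsTree) {v w : Fin n} (p : G.Walk v w) (hp : p.IsPath)
    (hl : 1 < p.length) (h1 : p.getVert 1 = r) :
    Par h r (p.getVert (p.length - 1)) w := by
  cases p with
  | nil => simp at hl
  | cons ha q =>
    rw [Walk.getVert_cons_succ, Walk.getVert_zero] at h1
    subst h1
    rw [Walk.length_cons] at hl
    have hres := desc_root h q hp.of_cons (by omega)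
    have hlq : (Walk.cons ha q).length - 1 = (q.length - 1) + 1 := by
      rw [Walk.length_cons]; omega
    rw [hlq, Walk.getVert_cons_succ]
    exact hres


lemma root_not_mem [DecidableRel G.Adj] (h : G.IsTree) (hn : 2 ≤ n) (ω : Sym2 (Fin n) → ℕ)
    (hroot : IsIncreasingRoot G ω r) : r ∉ Aset G ω := by
  rintro ⟨m, w, p, hm, hp, hlen, hlt⟩
  have hsl : p.support.length = p.length + 1 := p.length_support
  have hplen : p.length = 2 * m - 1 := by omega
  have hlp : 0 < p.length := by omega
  have hdesc := desc_root h p hp hlp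
  have hE : p.support.getD (2 * m - 2) r = p.getVert (p.length - 1) := by
    rw [support_getD_eq_getVert p _ _ (by omega)]
    congr 1
    omega
  rw [hE] at hlt
  exact absurd (mu_le h hn ω hroot hdesc) (not_le.2 hlt)

lemma max_not_mem [DecidableRel G.Adj] (h : G.IsTree) (hn : 2 ≤ n) (ω : Sym2 (Fin n) → ℕ)
    (hroot : IsIncreasingRoot G ω r) {x : Fin n} (hx : G.Adj r x)
    (hmax : muWeight G ω r = ω s(x, r)) : x ∉ Aset G ω := by
  rintro ⟨m, w, p, hm, hp, hlen, hlt⟩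
  have hsl : p.support.length = p.length + 1 := p.length_support
  have hplen : p.length = 2 * m - 1 := by omega
  have hlp : 0 < p.length := by omega
  have hE : p.support.getD (2 * m - 2) x = p.getVert (p.length - 1) := by
    rw [support_getD_eq_getVert p _ _ (by omega)]
    congr 1
    omega
  rw [hE] at hlt
  have huw : G.Adj (p.getVert (p.length - 1)) w := by
    have := p.adj_getVert_succ (i := p.length - 1) (by omega)
    rwa [show p.length - 1 + 1 = p.length by omega, Walk.getVert_length] at this
  by_cases hpar : Par h r (p.getVert (p.length - 1)) w
  · exact absurd (mu_le h hn ω hroot hpar) (not_le.2 hlt)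
  · have hg1 : p.getVert 1 = r := by
      have hadj1 : G.Adj x (p.getVert 1) := by
        have := p.adj_getVert_succ (i := 0) hlp
        rwa [Walk.getVert_zero] at this
      rcases par_dichotomy h hadj1 with h1 | h1
      · exact absurd (desc h p hp hlp h1) hpar
      · have h2 : Par h r r x :=
          (par_dichotomy h hx).resolve_right (not_par_root h x)
        exact par_unique h h1 h2
    by_cases hone : p.length = 1
    · have hw : w = r := by
        rw [← p.getVert_length, hone, hg1]
      subst hw
      have hx0 : p.getVert (p.length - 1) = x := by rw [hone]; exact p.getVert_zero
      rw [hx0, hmax] at hlt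
      exact absurd hlt (lt_irrefl _)
    · exact hpar (after_root h p hp (by omega) hg1)

end BipartAux

/-- **Lemma.** Let `(G_ω, r)` be an increasing weighted tree with bipartition `(U, V)`
(encoded by a proper 2-coloring `c`). Then neither side of the bipartition is entirely
contained in `A(G_ω)`. -/
theorem bipartition_not_subset_Aset {n : ℕ} (G : SimpleGraph (Fin n))
    [DecidableRel G.Adj] (ω : Sym2 (Fin n) → ℕ) (r : Fin n)
    (hn : 2 ≤ n) (htree : G.IsTree) (hpos : ∀ e ∈ G.edgeSet, 1 ≤ ω e)
    (hroot : IsIncreasingRoot G ω r)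
    (c : Fin n → Bool) (hc : ∀ i j : Fin n, G.Adj i j → c i ≠ c j) :
    ¬ ({v : Fin n | c v = true} ⊆ Aset G ω) ∧
      ¬ ({v : Fin n | c v = false} ⊆ Aset G ω) := by
  classical
  obtain ⟨x, hxmem, hmax⟩ :=
    Finset.exists_mem_eq_sup (G.neighborFinset r)
      (by
        obtain ⟨u, hu⟩ := BipartAux.exists_adj htree hn r
        exact ⟨u, by rwa [SimpleGraph.mem_neighborFinset]⟩)
      (fun u => ω s(u, r))
  rw [SimpleGraph.mem_neighborFinset] at hxmem
  have hR : r ∉ Aset G ω := BipartAux.root_not_mem htree hn ω hroot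
  have hX : x ∉ Aset G ω := BipartAux.max_not_mem htree hn ω hroot hxmem hmax
  have hcx : c r ≠ c x := hc r x hxmem
  constructor
  · intro hsub
    by_cases hcr : c r = true
    · exact hR (hsub hcr)
    · have hcx' : c x = true := by
        cases hv : c x
        · cases hv' : c r
          · exact absurd (hv'.trans hv.symm) hcx
          · exact absurd hv' hcr
        · rfl
      exact hX (hsub hcx')
  · intro hsub
    by_cases hcr : c r = false
    · exact hR (hsub hcr)
    · have hcx' : c x = false := by
        cases hv : c x
        · rfl
        · cases hv' : c r
          · exact absurd hv' hcr
          · exact absurd (hv'.trans hv.symm) hcx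
      exact hX (hsub hcx')
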